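/- Let k ≥ 2, γ > 0, x ∈ ℝ^k, y ∈ ℝ, a₀ > 1/2, b₀ > 0, and let X = xᵀ (a 1×k matrix). Then the full-model posterior loss L_full = (b₀ + (y²/2)(1 − X(XᵀX + γ k I_k)⁻¹Xᵀ))/(a₀ − 1/2) · (1 + tr((XᵀX + γ k I_k)⁻¹)) is at least the best single-covariate loss min_j (b₀ + (γ y²)/(2(x_j² + γ)))/(a₀ − 1/2) · (1 + 1/(x_j² + γ)). -/

import Mathlib

open Matrix

private lemma stmt_18_aux (k γ a₀ b₀ y s m : ℝ) (hk2 : 2 ≤ k) (hγ : 0 < γ)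
    (ha : 1 / 2 < a₀) (hb : 0 < b₀) (hs0 : 0 ≤ s) (hm0 : 0 ≤ m) (hsm : s ≤ k * m) :
    (b₀ + γ * y ^ 2 / (2 * (m + γ))) / (a₀ - 1 / 2) * (1 + 1 / (m + γ)) ≤
      (b₀ + y ^ 2 / 2 * (γ * k / (s + γ * k))) / (a₀ - 1 / 2) *
        (1 + 1 / (γ * k) * (k - s / (s + γ * k))) := by
  have hc : 0 < γ * k := by nlinarith
  have hsc : 0 < s + γ * k := by linarith
  have hmγ : 0 < m + γ := by linarith
  have hd : 0 < a₀ - 1 / 2 := by linarith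
  have hF1 : b₀ + γ * y ^ 2 / (2 * (m + γ)) ≤ b₀ + y ^ 2 / 2 * (γ * k / (s + γ * k)) := by
    have hg : γ / (m + γ) ≤ γ * k / (s + γ * k) := by
      rw [div_le_div_iff₀ hmγ hsc]
      nlinarith
    have h2 : γ * y ^ 2 / (2 * (m + γ)) = y ^ 2 / 2 * (γ / (m + γ)) := by
      field_simp
    rw [h2]
    have := mul_le_mul_of_nonneg_left hg (by positivity : (0:ℝ) ≤ y ^ 2 / 2)
    linarith
  have hF2 : 1 + 1 / (m + γ) ≤ 1 + 1 / (γ * k) * (k - s / (s + γ * k)) := by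
    have hT : 1 / (γ * k) * (k - s / (s + γ * k)) = ((k - 1) * s + k * (γ * k)) / ((γ * k) * (s + γ * k)) := by
      field_simp; ring
    rw [hT]
    have : 1 / (m + γ) ≤ ((k - 1) * s + k * (γ * k)) / ((γ * k) * (s + γ * k)) := by
      rw [div_le_div_iff₀ hmγ (by positivity)]
      nlinarith [mul_nonneg (mul_nonneg (by linarith : (0:ℝ) ≤ k - 1) hs0) hm0,
        mul_nonneg (mul_nonneg (by linarith : (0:ℝ) ≤ k - 1) hs0) hγ.le]
    linarith
  have hdiv : (b₀ + γ * y ^ 2 / (2 * (m + γ))) / (a₀ - 1 / 2)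
      ≤ (b₀ + y ^ 2 / 2 * (γ * k / (s + γ * k))) / (a₀ - 1 / 2) := by gcongr
  exact mul_le_mul hdiv hF2 (by positivity) (div_nonneg (by positivity) hd.le)

/-- Single observation (`n = 1`): the full-model posterior loss
`(b₀ + (y²/2)(1 − X(XᵀX + γk I_k)⁻¹Xᵀ))/(a₀ − 1/2) · (1 + tr((XᵀX + γk I_k)⁻¹))`
is at least the best single-covariate posterior loss
`min_j (b₀ + γy²/(2(x_j² + γ)))/(a₀ − 1/2) · (1 + 1/(x_j² + γ))`. -/
theorem stmt_18 {k : ℕ} (hk : 2 ≤ k) (γ a₀ b₀ y : ℝ)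
    (hγ : 0 < γ) (ha : 1 / 2 < a₀) (hb : 0 < b₀)
    (x : Fin k → ℝ) (X : Matrix (Fin 1) (Fin k) ℝ)
    (hX : X = Matrix.of fun _ i => x i) :
    ∃ j : Fin k,
      (b₀ + γ * y ^ 2 / (2 * ((x j) ^ 2 + γ))) / (a₀ - 1 / 2) *
          (1 + 1 / ((x j) ^ 2 + γ)) ≤
        (b₀ + y ^ 2 / 2 *
            (1 - (X * (Xᵀ * X + (γ * (k : ℝ)) • (1 : Matrix (Fin k) (Fin k) ℝ))⁻¹ * Xᵀ) 0 0)) /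
            (a₀ - 1 / 2) *
          (1 + Matrix.trace (Xᵀ * X + (γ * (k : ℝ)) • (1 : Matrix (Fin k) (Fin k) ℝ))⁻¹) := by
  have hk0 : (0:ℕ) < k := by omega
  have hkR : (2:ℝ) ≤ (k:ℝ) := by exact_mod_cast hk
  set c : ℝ := γ * (k:ℝ) with hc_def
  have hc : 0 < c := by positivity
  set s : ℝ := ∑ i, x i ^ 2 with hs_def
  have hs0 : 0 ≤ s := Finset.sum_nonneg fun i _ => sq_nonneg _
  have hsc : 0 < s + c := by linarith
  -- the explicit inverse
  set B : Matrix (Fin k) (Fin k) ℝ :=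
    Matrix.of (fun p l => (1/c) * ((if p = l then (1:ℝ) else 0) - x p * x l / (s+c))) with hB_def
  have hxx : ∑ p, x p * x p = s := by
    rw [hs_def]; exact Finset.sum_congr rfl fun p _ => (sq (x p)).symm
  have hMB : (Xᵀ * X + c • (1 : Matrix (Fin k) (Fin k) ℝ)) * B = 1 := by
    ext i l
    rw [Matrix.mul_apply]
    have step : ∀ p, (Xᵀ * X + c • (1 : Matrix (Fin k) (Fin k) ℝ)) i p * B p l
        = (1/c) * (x i * (if p = l then x p else 0)) - (x i * x l/(c*(s+c))) * (x p * x p)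
          + (if i = p then ((if p = l then (1:ℝ) else 0) - x p * x l/(s+c)) else 0) := by
      intro p
      have hMentry : (Xᵀ * X + c • (1 : Matrix (Fin k) (Fin k) ℝ)) i p
          = x i * x p + (if i = p then c else 0) := by
        simp [Matrix.mul_apply, Matrix.one_apply, hX, Fin.sum_univ_one, mul_ite, mul_one, mul_zero]
      rw [hMentry, hB_def]
      simp only [Matrix.of_apply]
      by_cases h1 : i = p <;> by_cases h2 : p = l
      · simp only [if_pos h1, if_pos h2]; field_simp
      · simp only [if_pos h1, if_neg h2]; field_simp; ring
      · simp only [if_neg h1, if_pos h2]; field_simp; ring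
      · simp only [if_neg h1, if_neg h2]; field_simp; ring
    rw [Finset.sum_congr rfl fun p _ => step p]
    rw [Finset.sum_add_distrib, Finset.sum_sub_distrib, ← Finset.mul_sum, ← Finset.mul_sum,
      ← Finset.mul_sum, Finset.sum_ite_eq' Finset.univ l (fun p => x p),
      Finset.sum_ite_eq Finset.univ i, hxx]
    simp only [Finset.mem_univ, if_true, Matrix.one_apply]
    by_cases h : i = l <;> simp only [h, if_true, if_false] <;> field_simp <;> ring
  have hinv : (Xᵀ * X + c • (1 : Matrix (Fin k) (Fin k) ℝ))⁻¹ = B :=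
    Matrix.inv_eq_right_inv hMB
  -- the quadratic form value
  have hA : (X * B * Xᵀ) 0 0 = s / (s + c) := by
    rw [Matrix.mul_apply]
    have inner : ∀ l, (X * B) 0 l = x l / (s + c) := by
      intro l
      rw [Matrix.mul_apply]
      have step : ∀ p, X 0 p * B p l
          = (1/c) * (if p = l then x p else 0) - (x l/(c*(s+c))) * (x p * x p) := by
        intro p
        rw [hX, hB_def]
        simp only [Matrix.of_apply]
        by_cases h2 : p = l
        · simp only [if_pos h2]; field_simp
        · simp only [if_neg h2]; field_simp; ring
      rw [Finset.sum_congr rfl fun p _ => step p]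
      rw [Finset.sum_sub_distrib, ← Finset.mul_sum, ← Finset.mul_sum,
        Finset.sum_ite_eq' Finset.univ l (fun p => x p), hxx]
      simp only [Finset.mem_univ, if_true]
      field_simp; ring
    have : ∀ l, (X * B) 0 l * Xᵀ l 0 = (1/(s+c)) * (x l * x l) := by
      intro l; rw [inner l]
      simp only [Matrix.transpose_apply, hX, Matrix.of_apply]
      ring
    rw [Finset.sum_congr rfl fun l _ => this l, ← Finset.mul_sum, hxx]
    field_simp
  -- the trace value
  have htr : Matrix.trace B = (1/c) * ((k:ℝ) - s/(s+c)) := by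
    rw [Matrix.trace]
    have : ∀ p, Matrix.diag B p = (1/c) - (1/(c*(s+c))) * (x p * x p) := by
      intro p
      show B p p = _
      rw [hB_def]
      simp only [Matrix.of_apply, if_pos rfl, if_true]
      field_simp
    rw [Finset.sum_congr rfl fun p _ => this p, Finset.sum_sub_distrib, ← Finset.mul_sum, hxx]
    simp [Finset.card_univ]
    field_simp
  -- choose the maximizing index
  obtain ⟨j, -, hj⟩ := Finset.exists_max_image Finset.univ (fun j => x j ^ 2)
    ⟨⟨0, hk0⟩, Finset.mem_univ _⟩
  refine ⟨j, ?_⟩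
  set m : ℝ := x j ^ 2 with hm_def
  have hm0 : 0 ≤ m := sq_nonneg _
  have hmγ : 0 < m + γ := by linarith
  have hsm : s ≤ (k:ℝ) * m := by
    calc s = ∑ i, x i ^ 2 := hs_def
    _ ≤ ∑ _i : Fin k, m := Finset.sum_le_sum fun i _ => hj i (Finset.mem_univ i)
    _ = (k:ℝ) * m := by simp [Finset.card_univ, mul_comm]
  rw [hinv, hA, htr]
  have h1s : 1 - s / (s + c) = c / (s + c) := by field_simp; ring
  rw [h1s, hc_def]
  have := stmt_18_aux (k:ℝ) γ a₀ b₀ y s m hkR hγ ha hb hs0 hm0 hsm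
  exact this
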